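/- Let G be a multiplicative Lie algebra. Then there exists a multiplicative Lie algebra H which is a stem multiplicative Lie algebra (i.e. 𝒵(H) ⊆ ^M[H,H]) such that G and H are isoclinic. -/

import Mathlib

universe u v

open scoped commutatorElement

/-- A multiplicative Lie algebra: a group with an extra binary operation `⋆`
satisfying the Ellis axioms. -/
class MultLieAlgebra (G : Type u) extends Group G where
  lstar : G → G → G
  lstar_self : ∀ g : G, lstar g g = 1
  lstar_mul_right : ∀ g h h' : G, lstar g (h * h') = lstar g h * (h * lstar g h' * h⁻¹)
  lstar_mul_left : ∀ g g' h : G, lstar (g * g') h = (g * lstar g' h * g⁻¹) * lstar g h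
  lstar_jacobi : ∀ g h k : G,
      lstar (lstar g h) (h * k * h⁻¹) * lstar (lstar h k) (k * g * k⁻¹) *
        lstar (lstar k g) (g * h * g⁻¹) = 1
  conj_lstar : ∀ k g h : G, k * lstar g h * k⁻¹ = lstar (k * g * k⁻¹) (k * h * k⁻¹)

namespace MultLieAlgebra

infixl:72 " ⋆ " => MultLieAlgebra.lstar

variable {G : Type u} [MultLieAlgebra G]

lemma one_lstar (x : G) : (1 : G) ⋆ x = 1 := by
  have h := lstar_mul_left (1 : G) 1 x
  simp only [one_mul, inv_one, mul_one] at h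
  exact (right_eq_mul.mp h)

lemma lstar_one (x : G) : x ⋆ (1 : G) = 1 := by
  have h := lstar_mul_right x (1 : G) 1
  simp only [one_mul, inv_one, mul_one] at h
  exact left_eq_mul.mp h

lemma inv_lstar_of_lstar_eq_one {g : G} (hg : ∀ x : G, g ⋆ x = 1) (y : G) : g⁻¹ ⋆ y = 1 := by
  have h := lstar_mul_left g⁻¹ g y
  simp only [inv_mul_cancel, one_lstar, hg, mul_one, inv_inv] at h
  simpa using h.symm

lemma lstar_inv_of_lstar_eq_one {g : G} (hg : ∀ x : G, x ⋆ g = 1) (y : G) : y ⋆ g⁻¹ = 1 := by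
  have h := lstar_mul_right y g⁻¹ g
  simp only [inv_mul_cancel, lstar_one, hg, mul_one, inv_inv] at h
  simpa using h.symm

/-- The multiplicative commutator ideal `ᴹ[G,G]`, generated by all commutators
`⁅a,b⁆` and all values `a ⋆ b`. -/
def mlCommutator (G : Type u) [MultLieAlgebra G] : Subgroup G :=
  Subgroup.closure {x : G | (∃ a b : G, x = ⁅a, b⁆) ∨ ∃ a b : G, x = a ⋆ b}

lemma commutator_mem_mlCommutator (a b : G) : ⁅a, b⁆ ∈ mlCommutator G :=
  Subgroup.subset_closure (Or.inl ⟨a, b, rfl⟩)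

lemma lstar_mem_mlCommutator (a b : G) : a ⋆ b ∈ mlCommutator G :=
  Subgroup.subset_closure (Or.inr ⟨a, b, rfl⟩)

instance mlCommutator_normal : (mlCommutator G).Normal := by
  constructor
  intro n hn g
  induction hn using Subgroup.closure_induction with
  | mem x hx =>
    rcases hx with ⟨a, b, rfl⟩ | ⟨a, b, rfl⟩
    · have : g * ⁅a, b⁆ * g⁻¹ = ⁅g * a * g⁻¹, g * b * g⁻¹⁆ := by
        simp only [commutatorElement_def]; group
      rw [this]; exact commutator_mem_mlCommutator _ _
    · rw [conj_lstar]; exact lstar_mem_mlCommutator _ _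
  | one => simpa using one_mem (mlCommutator G)
  | mul x y hx hy ihx ihy =>
    have : g * (x * y) * g⁻¹ = (g * x * g⁻¹) * (g * y * g⁻¹) := by group
    rw [this]; exact mul_mem ihx ihy
  | inv x hx ihx =>
    have : g * x⁻¹ * g⁻¹ = (g * x * g⁻¹)⁻¹ := by group
    rw [this]; exact inv_mem ihx

/-- The multiplicative Lie center `𝒵(G) = Z(G) ∩ LZ(G)`. -/
def mlCenter (G : Type u) [MultLieAlgebra G] : Subgroup G where
  carrier := {g : G | (∀ x : G, g * x = x * g) ∧ ∀ x : G, g ⋆ x = 1 ∧ x ⋆ g = 1}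
  one_mem' := ⟨fun x => by simp, fun x => ⟨one_lstar x, lstar_one x⟩⟩
  mul_mem' := by
    rintro a b ⟨ha₁, ha₂⟩ ⟨hb₁, hb₂⟩
    refine ⟨fun x => by rw [mul_assoc, hb₁ x, ← mul_assoc, ha₁ x, mul_assoc], fun x => ?_⟩
    constructor
    · rw [lstar_mul_left, (hb₂ x).1, (ha₂ x).1]; simp
    · rw [lstar_mul_right, (ha₂ x).2, (hb₂ x).2]; simp
  inv_mem' := by
    rintro a ⟨ha₁, ha₂⟩
    refine ⟨fun x => by rw [inv_mul_eq_iff_eq_mul, ← mul_assoc, ha₁ x, mul_assoc,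
      mul_inv_cancel, mul_one], fun x => ?_⟩
    exact ⟨inv_lstar_of_lstar_eq_one (fun y => (ha₂ y).1) x,
      lstar_inv_of_lstar_eq_one (fun y => (ha₂ y).2) x⟩

lemma mem_mlCenter_iff {g : G} :
    g ∈ mlCenter G ↔ (∀ x : G, g * x = x * g) ∧ ∀ x : G, g ⋆ x = 1 ∧ x ⋆ g = 1 :=
  Iff.rfl

instance mlCenter_normal : (mlCenter G).Normal := by
  constructor
  intro n hn g
  have h : g * n * g⁻¹ = n := by rw [← hn.1 g]; group
  rw [h]; exact hn

/-- An isoclinism between two multiplicative Lie algebras. -/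
structure Isoclinism (G : Type u) (H : Type v) [MultLieAlgebra G] [MultLieAlgebra H] where
  lam : (G ⧸ mlCenter G) ≃* (H ⧸ mlCenter H)
  mu : mlCommutator G ≃* mlCommutator H
  map_commutator : ∀ (g g' : G) (h h' : H),
    lam (QuotientGroup.mk g) = QuotientGroup.mk h →
    lam (QuotientGroup.mk g') = QuotientGroup.mk h' →
    (mu ⟨⁅g, g'⁆, commutator_mem_mlCommutator g g'⟩ : H) = ⁅h, h'⁆
  map_lstar : ∀ (g g' : G) (h h' : H),
    lam (QuotientGroup.mk g) = QuotientGroup.mk h →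
    lam (QuotientGroup.mk g') = QuotientGroup.mk h' →
    (mu ⟨g ⋆ g', lstar_mem_mlCommutator g g'⟩ : H) = h ⋆ h'

/-- Two multiplicative Lie algebras are isoclinic if there is an isoclinism between them. -/
def Isoclinic (G : Type u) (H : Type v) [MultLieAlgebra G] [MultLieAlgebra H] : Prop :=
  Nonempty (Isoclinism G H)

/-- Componentwise multiplicative Lie algebra structure on a binary product. -/
instance instProd (G : Type u) (H : Type v) [MultLieAlgebra G] [MultLieAlgebra H] :
    MultLieAlgebra (G × H) where
  lstar a b := (a.1 ⋆ b.1, a.2 ⋆ b.2)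
  lstar_self a := by ext <;> simp [lstar_self]
  lstar_mul_right a b c := by ext <;> simp [lstar_mul_right]
  lstar_mul_left a b c := by ext <;> simp [lstar_mul_left]
  lstar_jacobi a b c := by ext <;> simp [lstar_jacobi]
  conj_lstar k a b := by ext <;> simp [← conj_lstar]

/-- Componentwise multiplicative Lie algebra structure on a Pi type. -/
instance instPi {ι : Type v} (f : ι → Type u) [∀ i, MultLieAlgebra (f i)] :
    MultLieAlgebra (∀ i, f i) where
  lstar a b := fun i => a i ⋆ b i
  lstar_self a := by funext i; simp [lstar_self]
  lstar_mul_right a b c := by funext i; simp [lstar_mul_right]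
  lstar_mul_left a b c := by funext i; simp [lstar_mul_left]
  lstar_jacobi a b c := by funext i; simp [lstar_jacobi]
  conj_lstar k a b := by funext i; simp [← conj_lstar]

/-- The trivial multiplicative Lie algebra structure on the one-element group. -/
instance instPUnit : MultLieAlgebra PUnit.{u+1} where
  lstar _ _ := 1
  lstar_self _ := rfl
  lstar_mul_right _ _ _ := rfl
  lstar_mul_left _ _ _ := rfl
  lstar_jacobi _ _ _ := rfl
  conj_lstar _ _ _ := rfl

/-- A subalgebra of a multiplicative Lie algebra: a subgroup closed under `⋆`. -/
structure MLSubalgebra (G : Type u) [MultLieAlgebra G] extends Subgroup G where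
  lstar_mem' : ∀ {a b : G}, a ∈ carrier → b ∈ carrier → a ⋆ b ∈ carrier

/-- A subalgebra is a multiplicative Lie algebra with the restricted operations. -/
instance instSubalgebra (H : MLSubalgebra G) : MultLieAlgebra H.toSubgroup where
  lstar a b := ⟨(a : G) ⋆ (b : G), H.lstar_mem' a.2 b.2⟩
  lstar_self a := Subtype.ext (lstar_self (a : G))
  lstar_mul_right a b c := Subtype.ext (lstar_mul_right (a : G) b c)
  lstar_mul_left a b c := Subtype.ext (lstar_mul_left (a : G) b c)
  lstar_jacobi a b c := Subtype.ext (lstar_jacobi (a : G) b c)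
  conj_lstar k a b := Subtype.ext (conj_lstar (k : G) a b)

lemma mul_center_lstar {z : G} (hz : z ∈ mlCenter G) (g y : G) : (g * z) ⋆ y = g ⋆ y := by
  rw [lstar_mul_left, (hz.2 y).1]
  simp

lemma lstar_mul_center {z : G} (hz : z ∈ mlCenter G) (g y : G) : y ⋆ (g * z) = y ⋆ g := by
  rw [lstar_mul_right, (hz.2 y).2]
  simp

/-- The subalgebra `H·𝒵(G)` generated by a subalgebra `H` and the multiplicative
Lie center of `G`. -/
def MLSubalgebra.centerJoin (H : MLSubalgebra G) : MLSubalgebra G where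
  carrier := {x : G | ∃ h ∈ H.carrier, ∃ z ∈ mlCenter G, x = h * z}
  one_mem' := ⟨1, H.toSubgroup.one_mem, 1, one_mem _, by simp⟩
  mul_mem' := by
    rintro x y ⟨h, hh, z, hz, rfl⟩ ⟨h', hh', z', hz', rfl⟩
    refine ⟨h * h', H.toSubgroup.mul_mem hh hh', z * z', mul_mem hz hz', ?_⟩
    rw [mul_assoc, ← mul_assoc z h' z', hz.1 h', mul_assoc, ← mul_assoc, ← mul_assoc]
  inv_mem' := by
    rintro x ⟨h, hh, z, hz, rfl⟩
    refine ⟨h⁻¹, H.toSubgroup.inv_mem hh, z⁻¹, inv_mem hz, ?_⟩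
    rw [mul_inv_rev, (inv_mem hz).1 h⁻¹]
  lstar_mem' := by
    rintro x y ⟨h, hh, z, hz, rfl⟩ ⟨h', hh', z', hz', rfl⟩
    exact ⟨h ⋆ h', H.lstar_mem' hh hh', 1, one_mem _, by
      rw [mul_center_lstar hz, lstar_mul_center hz', mul_one]⟩

/-- An ideal of a multiplicative Lie algebra: a normal subgroup `I` with
`g ⋆ i ∈ I` and `i ⋆ g ∈ I` for all `g ∈ G`, `i ∈ I`. -/
structure MLIdeal (G : Type u) [MultLieAlgebra G] extends Subgroup G where
  conj_mem' : ∀ n : G, n ∈ carrier → ∀ g : G, g * n * g⁻¹ ∈ carrier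
  lstar_mem_left' : ∀ (g : G) {i : G}, i ∈ carrier → g ⋆ i ∈ carrier
  lstar_mem_right' : ∀ (g : G) {i : G}, i ∈ carrier → i ⋆ g ∈ carrier

instance MLIdeal.normal (I : MLIdeal G) : I.toSubgroup.Normal := ⟨I.conj_mem'⟩

/-- An ideal is in particular a subalgebra. -/
def MLIdeal.toMLSubalgebra (I : MLIdeal G) : MLSubalgebra G :=
  { I.toSubgroup with lstar_mem' := fun {a _} _ hb => I.lstar_mem_left' a hb }

lemma MLIdeal.lstar_congr (I : MLIdeal G) {a a' b b' : G}
    (ha : a⁻¹ * a' ∈ I.toSubgroup) (hb : b⁻¹ * b' ∈ I.toSubgroup) :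
    (a ⋆ b)⁻¹ * (a' ⋆ b') ∈ I.toSubgroup := by
  obtain ⟨i, hi, rfl⟩ : ∃ i ∈ I.toSubgroup, a' = a * i :=
    ⟨a⁻¹ * a', ha, by group⟩
  obtain ⟨j, hj, rfl⟩ : ∃ j ∈ I.toSubgroup, b' = b * j :=
    ⟨b⁻¹ * b', hb, by group⟩
  have h1 : (a * i) ⋆ (b * j) = (a * (i ⋆ (b * j)) * a⁻¹) * (a ⋆ (b * j)) :=
    lstar_mul_left a i (b * j)
  have h2 : a ⋆ (b * j) = (a ⋆ b) * (b * (a ⋆ j) * b⁻¹) := lstar_mul_right a b j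
  rw [h1, h2]
  have hu : a * (i ⋆ (b * j)) * a⁻¹ ∈ I.toSubgroup :=
    I.conj_mem' _ (I.lstar_mem_right' _ hi) a
  have hv : b * (a ⋆ j) * b⁻¹ ∈ I.toSubgroup :=
    I.conj_mem' _ (I.lstar_mem_left' _ hj) b
  have : (a ⋆ b)⁻¹ * (a * (i ⋆ (b * j)) * a⁻¹ * ((a ⋆ b) * (b * (a ⋆ j) * b⁻¹))) =
      ((a ⋆ b)⁻¹ * (a * (i ⋆ (b * j)) * a⁻¹) * (a ⋆ b)) * (b * (a ⋆ j) * b⁻¹) := by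
    group
  rw [this]
  exact mul_mem (Subgroup.Normal.conj_mem' I.normal _ hu _) hv

/-- The quotient of a multiplicative Lie algebra by an ideal. -/
instance instQuotient (I : MLIdeal G) : MultLieAlgebra (G ⧸ I.toSubgroup) where
  lstar := Quotient.map₂ (· ⋆ ·) (by
    intro a a' ha b b' hb
    have ha' : a⁻¹ * a' ∈ I.toSubgroup := QuotientGroup.leftRel_apply.mp ha
    have hb' : b⁻¹ * b' ∈ I.toSubgroup := QuotientGroup.leftRel_apply.mp hb
    exact QuotientGroup.leftRel_apply.mpr (I.lstar_congr ha' hb'))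
  lstar_self x := Quotient.inductionOn x fun a => congrArg QuotientGroup.mk (lstar_self a)
  lstar_mul_right x y z := Quotient.inductionOn₃ x y z fun a b c =>
    congrArg QuotientGroup.mk (lstar_mul_right a b c)
  lstar_mul_left x y z := Quotient.inductionOn₃ x y z fun a b c =>
    congrArg QuotientGroup.mk (lstar_mul_left a b c)
  lstar_jacobi x y z := Quotient.inductionOn₃ x y z fun a b c =>
    congrArg QuotientGroup.mk (lstar_jacobi a b c)
  conj_lstar x y z := Quotient.inductionOn₃ x y z fun a b c =>
    congrArg QuotientGroup.mk (conj_lstar a b c)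

lemma quot_lstar (I : MLIdeal G) (a b : G) :
    (QuotientGroup.mk (a ⋆ b) : G ⧸ I.toSubgroup) = QuotientGroup.mk a ⋆ QuotientGroup.mk b :=
  rfl

/-- The ideal `I ∩ ᴹ[G,G]`. -/
def MLIdeal.infCommutator (I : MLIdeal G) : MLIdeal G where
  carrier := {x : G | x ∈ I.toSubgroup ∧ x ∈ mlCommutator G}
  one_mem' := ⟨one_mem _, one_mem _⟩
  mul_mem' := fun ha hb => ⟨mul_mem ha.1 hb.1, mul_mem ha.2 hb.2⟩
  inv_mem' := fun ha => ⟨inv_mem ha.1, inv_mem ha.2⟩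
  conj_mem' := fun n hn g =>
    ⟨I.conj_mem' n hn.1 g, Subgroup.Normal.conj_mem mlCommutator_normal n hn.2 g⟩
  lstar_mem_left' := by
    intro g i hi
    exact ⟨I.lstar_mem_left' g hi.1, lstar_mem_mlCommutator _ _⟩
  lstar_mem_right' := by
    intro g i hi
    exact ⟨I.lstar_mem_right' g hi.1, lstar_mem_mlCommutator _ _⟩

/-- A multiplicative Lie algebra isomorphism is a group isomorphism preserving `⋆`. -/
def IsMLAEquiv {G : Type u} {H : Type v} [MultLieAlgebra G] [MultLieAlgebra H]
    (e : G ≃* H) : Prop :=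
  ∀ a b : G, e (a ⋆ b) = e a ⋆ e b

/-- A witness that `G` and `H` arise as quotients of a common multiplicative Lie
algebra `K` by ideals `ZG`, `ZH`, with `G ∼ K ∼ H` (Theorem on common ancestors). -/
structure CommonQuotientWitness (G : Type u) (H : Type u)
    [MultLieAlgebra G] [MultLieAlgebra H] where
  K : Type u
  [instK : MultLieAlgebra K]
  ZG : MLIdeal K
  ZH : MLIdeal K
  isoG : G ≃* (K ⧸ ZH.toSubgroup)
  isoG_lstar : IsMLAEquiv isoG
  isoH : H ≃* (K ⧸ ZG.toSubgroup)
  isoH_lstar : IsMLAEquiv isoH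
  isoclinicGK : Isoclinic G K
  isoclinicKH : Isoclinic K H

/-- A witness that `G` and `H` embed as ideals of a common multiplicative Lie algebra
`K̃`, each isoclinic to `K̃` (common isoclinic descendant). -/
structure CommonIdealWitness (G : Type u) (H : Type u)
    [MultLieAlgebra G] [MultLieAlgebra H] where
  K : Type u
  [instK : MultLieAlgebra K]
  KG : MLIdeal K
  KH : MLIdeal K
  isoG : G ≃* KG.toMLSubalgebra.toSubgroup
  isoG_lstar : IsMLAEquiv isoG
  isoH : H ≃* KH.toMLSubalgebra.toSubgroup
  isoH_lstar : IsMLAEquiv isoH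
  isoclinicG : Isoclinic (KG.toMLSubalgebra.toSubgroup) K
  isoclinicH : Isoclinic (KH.toMLSubalgebra.toSubgroup) K

/-- A witness of a stem multiplicative Lie algebra isoclinic to `G`. -/
structure StemWitness (G : Type u) [MultLieAlgebra G] where
  H : Type u
  [instH : MultLieAlgebra H]
  stem : mlCenter H ≤ mlCommutator H
  isoclinic : Isoclinic G H


/-! ### Auxiliary construction for Statement 17 -/

section StemConstruction

lemma commutator_center_right {G : Type u} [Group G] (g a z : G)
    (hz : ∀ x : G, z * x = x * z) : ⁅g, a * z⁆ = ⁅g, a⁆ := by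
  have h1 : ⁅g, a * z⁆ = g * a * (z * g⁻¹) * (z⁻¹ * a⁻¹) := by
    simp only [commutatorElement_def, mul_inv_rev]; group
  rw [h1, hz g⁻¹]
  simp only [commutatorElement_def]; group

lemma commutator_center_left {G : Type u} [Group G] (g a z : G)
    (hz : ∀ x : G, z * x = x * z) : ⁅a * z, g⁆ = ⁅a, g⁆ := by
  have h1 : ⁅a * z, g⁆ = a * (z * g) * (z⁻¹ * a⁻¹) * g⁻¹ := by
    simp only [commutatorElement_def, mul_inv_rev]; group
  rw [h1, hz g]
  simp only [commutatorElement_def]; group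

variable (G : Type u) [MultLieAlgebra G]

instance : CommGroup ↥(mlCenter G) :=
  { (inferInstance : Group ↥(mlCenter G)) with
    mul_comm := fun a b => Subtype.ext (a.2.1 ↑b) }

/-- The divisible abelian group receiving the center. -/
abbrev stemD : Type u := CharacterModule (Additive ↥(mlCenter G)) → AddCircle (1 : ℚ)

noncomputable instance : DivisibleBy (stemD G) ℤ where
  div f n := fun c => DivisibleBy.div (f c) n
  div_zero f := funext fun c => DivisibleBy.div_zero (f c)
  div_cancel {n} f hn := funext fun c => DivisibleBy.div_cancel (f c) hn

/-- Evaluation embedding of the multiplicative Lie center into `stemD`. -/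
def stemIota : Additive ↥(mlCenter G) →+ stemD G where
  toFun z := fun c => c z
  map_zero' := funext fun c => map_zero c
  map_add' x y := funext fun c => map_add c x y

lemma stemIota_injective : Function.Injective (stemIota G) := by
  rw [injective_iff_map_eq_zero]
  intro a ha
  exact CharacterModule.eq_zero_of_character_apply fun c => congrFun ha c

/-- `𝒵(G) ∩ ᴹ[G,G]` as a subgroup of the center. -/
abbrev stemBZ : Subgroup ↥(mlCenter G) := (mlCommutator G).comap (mlCenter G).subtype

/-- The image of `𝒵(G) ∩ ᴹ[G,G]` in `stemD`. -/
abbrev stemIB : AddSubgroup (stemD G) :=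
  AddSubgroup.map (stemIota G) (Subgroup.toAddSubgroup (stemBZ G))

/-- The quotient of `stemD` by the image of `𝒵(G) ∩ ᴹ[G,G]`. -/
abbrev stemD2 : Type u := stemD G ⧸ stemIB G

noncomputable instance : DivisibleBy (stemD2 G) ℤ where
  div x n := QuotientAddGroup.mk (DivisibleBy.div x.out n)
  div_zero x := by
    show QuotientAddGroup.mk (DivisibleBy.div (Quotient.out x) 0) = 0
    rw [DivisibleBy.div_zero]
    rfl
  div_cancel {n} x hn := by
    show n • (QuotientAddGroup.mk (DivisibleBy.div (Quotient.out x) n) : stemD2 G) = x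
    rw [← QuotientAddGroup.mk_zsmul, DivisibleBy.div_cancel _ hn, QuotientAddGroup.out_eq']

instance : CommGroup (G ⧸ mlCommutator G) :=
  { (inferInstance : Group (G ⧸ mlCommutator G)) with
    mul_comm := fun a b => QuotientGroup.induction_on a fun x =>
      QuotientGroup.induction_on b fun y => by
        rw [← QuotientGroup.mk_mul, ← QuotientGroup.mk_mul]
        refine QuotientGroup.eq.mpr ?_
        have h := commutator_mem_mlCommutator (y⁻¹ : G) (x⁻¹ : G)
        simpa [commutatorElement_def, mul_inv_rev, mul_assoc] using h }

/-- The natural map `𝒵(G) → G/ᴹ[G,G]`. -/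
def stemS : ↥(mlCenter G) →* G ⧸ mlCommutator G :=
  (QuotientGroup.mk' (mlCommutator G)).comp (mlCenter G).subtype

/-- The projection `stemD → stemD2`. -/
def stemPi : stemD G →+ stemD2 G := QuotientAddGroup.mk' (stemIB G)

lemma stemPi_surjective : Function.Surjective (stemPi G) :=
  QuotientAddGroup.mk'_surjective (stemIB G)

/-- The map `𝒵(G) → stemD2` through the embedding. -/
def stemGQ : ↥(mlCenter G) →* Multiplicative (stemD2 G) where
  toFun z := Multiplicative.ofAdd (stemPi G (stemIota G (Additive.ofMul z)))
  map_one' := by simp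
  map_mul' x y := by
    simp [← ofAdd_add, ← map_add]

lemma stemS_ker : (stemS G).ker = stemBZ G := by
  ext z
  simp [stemS, MonoidHom.mem_ker, QuotientGroup.eq_one_iff, Subgroup.mem_comap,
    Subgroup.mem_subgroupOf]

lemma stemGQ_ker (z : ↥(mlCenter G)) (hz : z ∈ (stemS G).ker) : stemGQ G z = 1 := by
  rw [stemS_ker] at hz
  have hmem : stemIota G (Additive.ofMul z) ∈ stemIB G :=
    AddSubgroup.mem_map.mpr ⟨Additive.ofMul z, (Iff.rfl.mpr hz), rfl⟩
  have : stemPi G (stemIota G (Additive.ofMul z)) = 0 :=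
    (QuotientAddGroup.eq_zero_iff _).mpr hmem
  simp [stemGQ, this]

instance : CommGroup (↥(mlCenter G) ⧸ (stemS G).ker) :=
  QuotientGroup.Quotient.commGroup _

lemma stemExt : ∃ h : Additive (G ⧸ mlCommutator G) →+ stemD2 G,
    h.comp (MonoidHom.toAdditive (QuotientGroup.kerLift (stemS G))) =
      MonoidHom.toAdditiveLeft (QuotientGroup.lift (stemS G).ker (stemGQ G) (stemGQ_ker G)) := by
  refine (Module.Baer.of_divisible _).extension_property_addMonoidHom
    (MonoidHom.toAdditive (QuotientGroup.kerLift (stemS G))) ?_ _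
  intro a b hab
  exact QuotientGroup.kerLift_injective (stemS G) hab

/-- The extension of the center projection to all of `G`. -/
noncomputable def stemPsi : G →* Multiplicative (stemD2 G) :=
  MonoidHom.toAdditiveLeft.symm
    ((stemExt G).choose.comp (MonoidHom.toAdditive (QuotientGroup.mk' (mlCommutator G))))

lemma stemPsi_apply (g : G) :
    stemPsi G g = Multiplicative.ofAdd
      ((stemExt G).choose (Additive.ofMul (QuotientGroup.mk g : G ⧸ mlCommutator G))) := rfl

lemma stemPsi_commutator {c : G} (hc : c ∈ mlCommutator G) : stemPsi G c = 1 := by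
  have h1 : (QuotientGroup.mk c : G ⧸ mlCommutator G) = 1 :=
    (QuotientGroup.eq_one_iff c).mpr hc
  rw [stemPsi_apply, h1]
  simp

lemma stemPsi_center (z : ↥(mlCenter G)) :
    stemPsi G ↑z = Multiplicative.ofAdd (stemPi G (stemIota G (Additive.ofMul z))) := by
  have h := congrArg (fun f => f (Additive.ofMul
      (QuotientGroup.mk z : ↥(mlCenter G) ⧸ (stemS G).ker))) (stemExt G).choose_spec
  simp only [AddMonoidHom.coe_comp, Function.comp_apply] at h
  have h1 : (MonoidHom.toAdditive (QuotientGroup.kerLift (stemS G)))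
      (Additive.ofMul (QuotientGroup.mk z : ↥(mlCenter G) ⧸ (stemS G).ker)) =
      Additive.ofMul (QuotientGroup.mk (z : G) : G ⧸ mlCommutator G) := by
    rfl
  have h2 : (MonoidHom.toAdditiveLeft (QuotientGroup.lift (stemS G).ker (stemGQ G) (stemGQ_ker G)))
      (Additive.ofMul (QuotientGroup.mk z : ↥(mlCenter G) ⧸ (stemS G).ker)) =
      stemPi G (stemIota G (Additive.ofMul z)) := by
    simp [MonoidHom.toAdditiveLeft, QuotientGroup.lift_mk, stemGQ]
  rw [h1, h2] at h
  rw [stemPsi_apply, h]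

/-- Trivial multiplicative Lie structure on the divisible group. -/
instance : MultLieAlgebra (Multiplicative (stemD G)) :=
  { (inferInstance : Group (Multiplicative (stemD G))) with
    lstar := fun _ _ => 1
    lstar_self := fun _ => rfl
    lstar_mul_right := fun _ h _ => by group
    lstar_mul_left := fun g _ _ => by group
    lstar_jacobi := fun _ _ _ => by group
    conj_lstar := fun k _ _ => by group }

@[simp] lemma stemD_lstar (a b : Multiplicative (stemD G)) : a ⋆ b = 1 := rfl

/-- The ambient product. -/
abbrev stemP : Type u := G × Multiplicative (stemD G)

/-- The homomorphism cutting out the stem subalgebra. -/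
noncomputable def stemChi : stemP G →* Multiplicative (stemD2 G) :=
  ((stemPsi G).comp (MonoidHom.fst _ _)) *
    ((AddMonoidHom.toMultiplicative (stemPi G)).comp (MonoidHom.snd _ _))

lemma stemChi_apply (p : stemP G) :
    stemChi G p = stemPsi G p.1 * Multiplicative.ofAdd (stemPi G p.2.toAdd) := rfl

/-- The stem subalgebra of the product. -/
noncomputable def stemH : MLSubalgebra (stemP G) :=
  { (stemChi G).ker with
    lstar_mem' := by
      intro a b _ _
      have h : a ⋆ b = ((a.1 ⋆ b.1 : G), (1 : Multiplicative (stemD G))) := rfl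
      show a ⋆ b ∈ (stemChi G).ker
      rw [MonoidHom.mem_ker, h, stemChi_apply]
      simp [stemPsi_commutator G (lstar_mem_mlCommutator a.1 b.1)] }

lemma mem_stemH_iff (p : stemP G) : p ∈ (stemH G).toSubgroup ↔ stemChi G p = 1 :=
  Iff.rfl

lemma stemH_lift (g : G) :
    ∃ d : stemD G, ((g, Multiplicative.ofAdd d) : stemP G) ∈ (stemH G).toSubgroup := by
  obtain ⟨d, hd⟩ := stemPi_surjective G (-(stemPsi G g).toAdd)
  refine ⟨d, ?_⟩
  rw [mem_stemH_iff, stemChi_apply]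
  simp [hd]

/-- A lift of an element of `G` into the stem subalgebra. -/
noncomputable def stemLift (g : G) : ↥(stemH G).toSubgroup :=
  ⟨(g, Multiplicative.ofAdd (stemH_lift G g).choose), (stemH_lift G g).choose_spec⟩

@[simp] lemma stemLift_fst (g : G) : ((stemLift G g : stemP G)).1 = g := rfl

/-- The central ideal `W` by which we quotient. -/
noncomputable def stemW : MLIdeal ↥(stemH G).toSubgroup where
  carrier := {h | ∃ z : ↥(mlCenter G), (h : stemP G).1 = ↑z ∧
    (h : stemP G).2 = Multiplicative.ofAdd (-(stemIota G (Additive.ofMul z)))}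
  one_mem' := ⟨1, by simp, by simp⟩
  mul_mem' := by
    rintro a b ⟨z, hz1, hz2⟩ ⟨w, hw1, hw2⟩
    refine ⟨z * w, ?_, ?_⟩
    · show ((a : stemP G) * (b : stemP G)).1 = _
      rw [Prod.fst_mul, hz1, hw1]; rfl
    · show ((a : stemP G) * (b : stemP G)).2 = _
      rw [Prod.snd_mul, hz2, hw2, ← ofAdd_add]
      congr 1
      rw [ofMul_mul, map_add]
      abel
  inv_mem' := by
    rintro a ⟨z, hz1, hz2⟩
    refine ⟨z⁻¹, ?_, ?_⟩
    · show ((a : stemP G)⁻¹).1 = _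
      rw [Prod.fst_inv, hz1]; rfl
    · show ((a : stemP G)⁻¹).2 = _
      rw [Prod.snd_inv, hz2, ← ofAdd_neg]
      congr 1
      rw [ofMul_inv, map_neg]
  conj_mem' := by
    rintro n hn g
    obtain ⟨z, hz1, hz2⟩ := hn
    have hc : g * n = n * g := by
      apply Subtype.ext
      show (g : stemP G) * n = (n : stemP G) * g
      apply Prod.ext
      · rw [Prod.fst_mul, Prod.fst_mul, hz1]
        exact (z.2.1 _).symm
      · rw [Prod.snd_mul, Prod.snd_mul, mul_comm]
    rw [hc, mul_inv_cancel_right]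
    exact ⟨z, hz1, hz2⟩
  lstar_mem_left' := by
    intro g i hi
    obtain ⟨z, hz1, hz2⟩ := hi
    have h : g ⋆ i = 1 := by
      apply Subtype.ext
      show ((g : stemP G).1 ⋆ (i : stemP G).1, (g : stemP G).2 ⋆ (i : stemP G).2) =
        ((1 : G), (1 : Multiplicative (stemD G)))
      rw [hz1, stemD_lstar, (z.2.2 (g : stemP G).1).2]
    rw [h]
    exact ⟨1, by simp, by simp⟩
  lstar_mem_right' := by
    intro g i hi
    obtain ⟨z, hz1, hz2⟩ := hi
    have h : i ⋆ g = 1 := by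
      apply Subtype.ext
      show ((i : stemP G).1 ⋆ (g : stemP G).1, (i : stemP G).2 ⋆ (g : stemP G).2) =
        ((1 : G), (1 : Multiplicative (stemD G)))
      rw [hz1, stemD_lstar, (z.2.2 (g : stemP G).1).1]
    rw [h]
    exact ⟨1, by simp, by simp⟩

/-- The stem multiplicative Lie algebra isoclinic to `G`. -/
abbrev stemHf : Type u := ↥(stemH G).toSubgroup ⧸ (stemW G).toSubgroup

/-- Second coordinate homomorphism. -/
noncomputable def stemSnd : ↥(stemH G).toSubgroup →* Multiplicative (stemD G) :=
  (MonoidHom.snd _ _).comp (stemH G).toSubgroup.subtype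

lemma mlCommutator_le_ker_snd : mlCommutator ↥(stemH G).toSubgroup ≤ (stemSnd G).ker := by
  rw [mlCommutator, Subgroup.closure_le]
  rintro x (⟨a, b, rfl⟩ | ⟨a, b, rfl⟩)
  · show stemSnd G ⁅a, b⁆ = 1
    rw [map_commutatorElement]
    exact commutatorElement_eq_one_iff_commute.mpr (Commute.all _ _)
  · show stemSnd G (a ⋆ b) = 1
    rfl

lemma stemW_inf {h : ↥(stemH G).toSubgroup} (hW : h ∈ (stemW G).toSubgroup)
    (hM : h ∈ mlCommutator ↥(stemH G).toSubgroup) : h = 1 := by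
  obtain ⟨z, hz1, hz2⟩ := hW
  have h2 : (h : stemP G).2 = 1 := mlCommutator_le_ker_snd G hM
  rw [hz2] at h2
  have hz0 : Additive.ofMul z = 0 := by
    apply stemIota_injective G
    rw [map_zero]
    have := congrArg Multiplicative.toAdd h2
    simpa using this
  have hz : z = 1 := hz0
  apply Subtype.ext
  apply Prod.ext
  · rw [hz1, hz]; rfl
  · rw [hz2, hz]; simp

/-- First coordinate map to `G/𝒵(G)`. -/
noncomputable def stemTheta : ↥(stemH G).toSubgroup →* G ⧸ mlCenter G :=
  (QuotientGroup.mk' (mlCenter G)).comp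
    ((MonoidHom.fst _ _).comp (stemH G).toSubgroup.subtype)

lemma stemW_le_ker : (stemW G).toSubgroup ≤ (stemTheta G).ker := by
  rintro w ⟨z, hz1, _⟩
  rw [MonoidHom.mem_ker]
  show QuotientGroup.mk (w : stemP G).1 = 1
  rw [hz1, QuotientGroup.eq_one_iff]
  exact z.2

/-- The induced map `stemHf → G/𝒵(G)`. -/
noncomputable def stemThetaBar : stemHf G →* G ⧸ mlCenter G :=
  QuotientGroup.lift _ (stemTheta G) (stemW_le_ker G)

lemma stemThetaBar_mk (h : ↥(stemH G).toSubgroup) :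
    stemThetaBar G (QuotientGroup.mk h) = QuotientGroup.mk (h : stemP G).1 := rfl

lemma stemThetaBar_surjective : Function.Surjective (stemThetaBar G) := by
  intro q
  refine QuotientGroup.induction_on q fun g => ?_
  exact ⟨QuotientGroup.mk (stemLift G g), rfl⟩

lemma rep_first_mem_center {h : ↥(stemH G).toSubgroup}
    (hc : (QuotientGroup.mk h : stemHf G) ∈ mlCenter (stemHf G)) :
    (h : stemP G).1 ∈ mlCenter G := by
  rw [mem_mlCenter_iff]
  constructor
  · intro x
    set h' := stemLift G x with hh'
    have e : (QuotientGroup.mk (h * h') : stemHf G) = QuotientGroup.mk (h' * h) := by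
      rw [QuotientGroup.mk_mul, QuotientGroup.mk_mul]
      exact hc.1 _
    have hmem : (h * h')⁻¹ * (h' * h) ∈ (stemW G).toSubgroup := QuotientGroup.eq.mp e
    have hcomm : (h * h')⁻¹ * (h' * h) = ⁅h'⁻¹, h⁻¹⁆ := by
      simp only [commutatorElement_def, inv_inv, mul_inv_rev]
      group
    have h1 : (h * h')⁻¹ * (h' * h) = 1 := by
      apply stemW_inf G hmem
      rw [hcomm]
      exact commutator_mem_mlCommutator _ _
    have h2 : h * h' = h' * h := inv_mul_eq_one.mp h1
    have := congrArg (fun t => ((t : ↥(stemH G).toSubgroup) : stemP G).1) h2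
    exact this
  · intro x
    set h' := stemLift G x with hh'
    constructor
    · have e : (QuotientGroup.mk (h ⋆ h') : stemHf G) = 1 := by
        rw [quot_lstar (stemW G)]
        exact (hc.2 _).1
      have hmem : h ⋆ h' ∈ (stemW G).toSubgroup := (QuotientGroup.eq_one_iff _).mp e
      have h1 : h ⋆ h' = 1 := stemW_inf G hmem (lstar_mem_mlCommutator h h')
      have := congrArg (fun t => ((t : ↥(stemH G).toSubgroup) : stemP G).1) h1
      exact this
    · have e : (QuotientGroup.mk (h' ⋆ h) : stemHf G) = 1 := by
        rw [quot_lstar (stemW G)]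
        exact (hc.2 _).2
      have hmem : h' ⋆ h ∈ (stemW G).toSubgroup := (QuotientGroup.eq_one_iff _).mp e
      have h1 : h' ⋆ h = 1 := stemW_inf G hmem (lstar_mem_mlCommutator h' h)
      have := congrArg (fun t => ((t : ↥(stemH G).toSubgroup) : stemP G).1) h1
      exact this

lemma center_eq_ker : mlCenter (stemHf G) = (stemThetaBar G).ker := by
  ext x
  constructor
  · intro hx
    obtain ⟨h, rfl⟩ := QuotientGroup.mk_surjective x
    rw [MonoidHom.mem_ker, stemThetaBar_mk, QuotientGroup.eq_one_iff]
    exact rep_first_mem_center G hx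
  · intro hx
    obtain ⟨h, rfl⟩ := QuotientGroup.mk_surjective x
    rw [MonoidHom.mem_ker, stemThetaBar_mk, QuotientGroup.eq_one_iff] at hx
    rw [mem_mlCenter_iff]
    constructor
    · intro y
      refine QuotientGroup.induction_on y fun h' => ?_
      have e : h * h' = h' * h := by
        apply Subtype.ext
        apply Prod.ext
        · exact hx.1 _
        · exact mul_comm _ _
      rw [← QuotientGroup.mk_mul, ← QuotientGroup.mk_mul, e]
    · intro y
      refine QuotientGroup.induction_on y fun h' => ?_
      constructor
      · rw [← quot_lstar (stemW G)]
        have e : h ⋆ h' = 1 := by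
          apply Subtype.ext
          apply Prod.ext
          · exact (hx.2 _).1
          · rfl
        rw [e, QuotientGroup.mk_one]
      · rw [← quot_lstar (stemW G)]
        have e : h' ⋆ h = 1 := by
          apply Subtype.ext
          apply Prod.ext
          · exact (hx.2 _).2
          · rfl
        rw [e, QuotientGroup.mk_one]

/-- The group isomorphism `G/𝒵(G) ≃ stemHf/𝒵(stemHf)`. -/
noncomputable def stemLam : (G ⧸ mlCenter G) ≃* (stemHf G ⧸ mlCenter (stemHf G)) :=
  ((QuotientGroup.quotientMulEquivOfEq (center_eq_ker G)).trans
    (QuotientGroup.quotientKerEquivOfSurjective _ (stemThetaBar_surjective G))).symm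

lemma stemLam_symm_mk (x : stemHf G) :
    (stemLam G).symm (QuotientGroup.mk x) = stemThetaBar G x := by
  show ((QuotientGroup.quotientMulEquivOfEq (center_eq_ker G)).trans
    (QuotientGroup.quotientKerEquivOfSurjective _ (stemThetaBar_surjective G)))
    (QuotientGroup.mk x) = stemThetaBar G x
  rw [MulEquiv.trans_apply, QuotientGroup.quotientMulEquivOfEq_mk]
  rfl

lemma stemLam_cond {g : G} {h : ↥(stemH G).toSubgroup}
    (hc : stemLam G (QuotientGroup.mk g) = QuotientGroup.mk (QuotientGroup.mk h : stemHf G)) :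
    ∃ z : ↥(mlCenter G), (h : stemP G).1 = g * ↑z := by
  have e : (QuotientGroup.mk g : G ⧸ mlCenter G) = QuotientGroup.mk (h : stemP G).1 := by
    have := congrArg (stemLam G).symm hc
    rw [MulEquiv.symm_apply_apply, stemLam_symm_mk, stemThetaBar_mk] at this
    exact this
  have hz : g⁻¹ * (h : stemP G).1 ∈ mlCenter G := QuotientGroup.eq.mp e
  exact ⟨⟨g⁻¹ * (h : stemP G).1, hz⟩, by group⟩

/-- The map from `ᴹ[G,G]` into the stem subalgebra. -/
noncomputable def stemJ : ↥(mlCommutator G) →* ↥(stemH G).toSubgroup where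
  toFun c := ⟨((c : G), 1), by
    rw [mem_stemH_iff, stemChi_apply]
    simp [stemPsi_commutator G c.2]⟩
  map_one' := by
    apply Subtype.ext
    apply Prod.ext <;> simp
  map_mul' a b := by
    apply Subtype.ext
    apply Prod.ext <;> simp

@[simp] lemma stemJ_coe (c : ↥(mlCommutator G)) :
    ((stemJ G c : ↥(stemH G).toSubgroup) : stemP G) = ((c : G), 1) := rfl

lemma exists_M_rep (x : G) (hx : x ∈ mlCommutator G) :
    ∃ h ∈ mlCommutator ↥(stemH G).toSubgroup, (h : stemP G) = (x, 1) := by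
  induction hx using Subgroup.closure_induction with
  | mem x hx =>
    rcases hx with ⟨a, b, rfl⟩ | ⟨a, b, rfl⟩
    · refine ⟨⁅stemLift G a, stemLift G b⁆, commutator_mem_mlCommutator _ _, ?_⟩
      have : ((⁅stemLift G a, stemLift G b⁆ : ↥(stemH G).toSubgroup) : stemP G) =
          ⁅(stemLift G a : stemP G), (stemLift G b : stemP G)⁆ :=
        map_commutatorElement ((stemH G).toSubgroup.subtype) _ _
      rw [this]
      apply Prod.ext
      · simp [commutatorElement_def]
      · simp only [commutatorElement_def]
        exact commutatorElement_eq_one_iff_commute.mpr (Commute.all _ _)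
    · exact ⟨stemLift G a ⋆ stemLift G b, lstar_mem_mlCommutator _ _, rfl⟩
  | one => exact ⟨1, one_mem _, rfl⟩
  | mul x y _ _ ihx ihy =>
    obtain ⟨hx', hxm, hxc⟩ := ihx
    obtain ⟨hy', hym, hyc⟩ := ihy
    refine ⟨hx' * hy', mul_mem hxm hym, ?_⟩
    show (hx' : stemP G) * (hy' : stemP G) = _
    rw [hxc, hyc]
    apply Prod.ext <;> simp
  | inv x _ ihx =>
    obtain ⟨hx', hxm, hxc⟩ := ihx
    refine ⟨hx'⁻¹, inv_mem hxm, ?_⟩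
    show (hx' : stemP G)⁻¹ = _
    rw [hxc]
    apply Prod.ext <;> simp

lemma stemJ_mem (c : ↥(mlCommutator G)) :
    stemJ G c ∈ mlCommutator ↥(stemH G).toSubgroup := by
  obtain ⟨h, hm, hc⟩ := exists_M_rep G (c : G) c.2
  have : h = stemJ G c := Subtype.ext (by rw [hc, stemJ_coe])
  rwa [this] at hm

lemma mk_mem_mlCommutator {h : ↥(stemH G).toSubgroup}
    (hm : h ∈ mlCommutator ↥(stemH G).toSubgroup) :
    (QuotientGroup.mk h : stemHf G) ∈ mlCommutator (stemHf G) := by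
  induction hm using Subgroup.closure_induction with
  | mem x hx =>
    rcases hx with ⟨a, b, rfl⟩ | ⟨a, b, rfl⟩
    · rw [show (QuotientGroup.mk ⁅a, b⁆ : stemHf G) =
        ⁅(QuotientGroup.mk a : stemHf G), QuotientGroup.mk b⁆ from
          map_commutatorElement (QuotientGroup.mk' (stemW G).toSubgroup) a b]
      exact commutator_mem_mlCommutator _ _
    · rw [quot_lstar (stemW G)]
      exact lstar_mem_mlCommutator _ _
  | one => simpa using one_mem (mlCommutator (stemHf G))
  | mul x y _ _ ihx ihy => rw [QuotientGroup.mk_mul]; exact mul_mem ihx ihy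
  | inv x _ ihx => rw [QuotientGroup.mk_inv]; exact inv_mem ihx

/-- The homomorphism `ᴹ[G,G] → ᴹ[stemHf, stemHf]`. -/
noncomputable def stemMu : ↥(mlCommutator G) →* ↥(mlCommutator (stemHf G)) where
  toFun c := ⟨QuotientGroup.mk (stemJ G c), mk_mem_mlCommutator G (stemJ_mem G c)⟩
  map_one' := by
    apply Subtype.ext
    show (QuotientGroup.mk (stemJ G 1) : stemHf G) = 1
    rw [map_one]
    rfl
  map_mul' a b := by
    apply Subtype.ext
    show (QuotientGroup.mk (stemJ G (a * b)) : stemHf G) = _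
    rw [map_mul, QuotientGroup.mk_mul]
    rfl

lemma stemMu_injective : Function.Injective (stemMu G) := by
  rw [injective_iff_map_eq_one]
  intro c hc
  have h1 : (QuotientGroup.mk (stemJ G c) : stemHf G) = 1 := congrArg Subtype.val hc
  have h2 : stemJ G c ∈ (stemW G).toSubgroup := (QuotientGroup.eq_one_iff _).mp h1
  obtain ⟨z, hz1, hz2⟩ := h2
  rw [stemJ_coe] at hz1 hz2
  have hz0 : Additive.ofMul z = 0 := by
    apply stemIota_injective G
    rw [map_zero]
    have := congrArg Multiplicative.toAdd hz2
    simpa using this.symm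
  have hz : z = 1 := hz0
  apply Subtype.ext
  show (c : G) = 1
  have hce : (c : G) = ((z : ↥(mlCenter G)) : G) := hz1
  rw [hce, hz]
  rfl

lemma stemMu_surjective : Function.Surjective (stemMu G) := by
  intro y
  suffices h : ∀ x ∈ mlCommutator (stemHf G),
      ∃ c : ↥(mlCommutator G), (QuotientGroup.mk (stemJ G c) : stemHf G) = x by
    obtain ⟨c, hc⟩ := h (y : stemHf G) y.2
    exact ⟨c, Subtype.ext hc⟩
  intro x hx
  induction hx using Subgroup.closure_induction with
  | mem x hx =>
    rcases hx with ⟨a, b, rfl⟩ | ⟨a, b, rfl⟩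
    · obtain ⟨ha, rfl⟩ := QuotientGroup.mk_surjective a
      obtain ⟨hb, rfl⟩ := QuotientGroup.mk_surjective b
      refine ⟨⟨⁅(ha : stemP G).1, (hb : stemP G).1⁆, commutator_mem_mlCommutator _ _⟩, ?_⟩
      rw [show ⁅(QuotientGroup.mk ha : stemHf G), QuotientGroup.mk hb⁆ =
        QuotientGroup.mk ⁅ha, hb⁆ from
          (map_commutatorElement (QuotientGroup.mk' (stemW G).toSubgroup) ha hb).symm]
      congr 1
      apply Subtype.ext
      rw [stemJ_coe]
      rw [show ((⁅ha, hb⁆ : ↥(stemH G).toSubgroup) : stemP G) =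
        ⁅(ha : stemP G), (hb : stemP G)⁆ from
          map_commutatorElement ((stemH G).toSubgroup.subtype) _ _]
      apply Prod.ext
      · rfl
      · exact (commutatorElement_eq_one_iff_commute.mpr (Commute.all _ _)).symm
    · obtain ⟨ha, rfl⟩ := QuotientGroup.mk_surjective a
      obtain ⟨hb, rfl⟩ := QuotientGroup.mk_surjective b
      refine ⟨⟨(ha : stemP G).1 ⋆ (hb : stemP G).1, lstar_mem_mlCommutator _ _⟩, ?_⟩
      rw [← quot_lstar (stemW G)]
      congr 1
  | one => exact ⟨1, by rw [map_one]; rfl⟩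
  | mul x y _ _ ihx ihy =>
    obtain ⟨cx, hcx⟩ := ihx
    obtain ⟨cy, hcy⟩ := ihy
    exact ⟨cx * cy, by rw [map_mul, QuotientGroup.mk_mul, hcx, hcy]⟩
  | inv x _ ihx =>
    obtain ⟨cx, hcx⟩ := ihx
    exact ⟨cx⁻¹, by rw [map_inv, QuotientGroup.mk_inv, hcx]⟩

/-- The isomorphism `ᴹ[G,G] ≃ ᴹ[stemHf, stemHf]`. -/
noncomputable def stemMuEquiv : ↥(mlCommutator G) ≃* ↥(mlCommutator (stemHf G)) :=
  MulEquiv.ofBijective (stemMu G) ⟨stemMu_injective G, stemMu_surjective G⟩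

lemma stem_map_commutator : ∀ (g g' : G) (h h' : stemHf G),
    stemLam G (QuotientGroup.mk g) = QuotientGroup.mk h →
    stemLam G (QuotientGroup.mk g') = QuotientGroup.mk h' →
    (stemMuEquiv G ⟨⁅g, g'⁆, commutator_mem_mlCommutator g g'⟩ : stemHf G) = ⁅h, h'⁆ := by
  intro g g' h h' h1 h2
  obtain ⟨hh, rfl⟩ := QuotientGroup.mk_surjective h
  obtain ⟨hh', rfl⟩ := QuotientGroup.mk_surjective h'
  obtain ⟨z, hz⟩ := stemLam_cond G h1
  obtain ⟨z', hz'⟩ := stemLam_cond G h2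
  show (QuotientGroup.mk (stemJ G ⟨⁅g, g'⁆, _⟩) : stemHf G) = _
  rw [show ⁅(QuotientGroup.mk hh : stemHf G), QuotientGroup.mk hh'⁆ =
    QuotientGroup.mk ⁅hh, hh'⁆ from
      (map_commutatorElement (QuotientGroup.mk' (stemW G).toSubgroup) hh hh').symm]
  congr 1
  apply Subtype.ext
  rw [stemJ_coe]
  rw [show ((⁅hh, hh'⁆ : ↥(stemH G).toSubgroup) : stemP G) =
    ⁅(hh : stemP G), (hh' : stemP G)⁆ from
      map_commutatorElement ((stemH G).toSubgroup.subtype) _ _]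
  apply Prod.ext
  · show ⁅g, g'⁆ = ⁅(hh : stemP G).1, (hh' : stemP G).1⁆
    rw [hz, hz', commutator_center_right (g * (z : G)) g' (z' : G) (fun x => (z'.2.1 x)),
      commutator_center_left g' g (z : G) (fun x => (z.2.1 x))]
  · exact (commutatorElement_eq_one_iff_commute.mpr (Commute.all _ _)).symm

lemma stem_map_lstar : ∀ (g g' : G) (h h' : stemHf G),
    stemLam G (QuotientGroup.mk g) = QuotientGroup.mk h →
    stemLam G (QuotientGroup.mk g') = QuotientGroup.mk h' →
    (stemMuEquiv G ⟨g ⋆ g', lstar_mem_mlCommutator g g'⟩ : stemHf G) = h ⋆ h' := by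
  intro g g' h h' h1 h2
  obtain ⟨hh, rfl⟩ := QuotientGroup.mk_surjective h
  obtain ⟨hh', rfl⟩ := QuotientGroup.mk_surjective h'
  obtain ⟨z, hz⟩ := stemLam_cond G h1
  obtain ⟨z', hz'⟩ := stemLam_cond G h2
  show (QuotientGroup.mk (stemJ G ⟨g ⋆ g', _⟩) : stemHf G) = _
  rw [← quot_lstar (stemW G)]
  congr 1
  apply Subtype.ext
  rw [stemJ_coe]
  show ((g ⋆ g' : G), (1 : Multiplicative (stemD G))) =
    ((hh : stemP G).1 ⋆ (hh' : stemP G).1, (hh : stemP G).2 ⋆ (hh' : stemP G).2)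
  rw [hz, hz', mul_center_lstar z.2 , lstar_mul_center z'.2, stemD_lstar]

lemma stemHf_stem : mlCenter (stemHf G) ≤ mlCommutator (stemHf G) := by
  intro x hx
  obtain ⟨h, rfl⟩ := QuotientGroup.mk_surjective x
  have hg : (h : stemP G).1 ∈ mlCenter G := rep_first_mem_center G hx
  set gz : ↥(mlCenter G) := ⟨(h : stemP G).1, hg⟩ with hgz
  have hmem : stemChi G (h : stemP G) = 1 := h.2
  rw [stemChi_apply] at hmem
  have hpsi : stemPsi G (h : stemP G).1 =
      Multiplicative.ofAdd (stemPi G (stemIota G (Additive.ofMul gz))) := stemPsi_center G gz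
  rw [hpsi, ← ofAdd_add, ← map_add] at hmem
  have hIB : stemIota G (Additive.ofMul gz) + (h : stemP G).2.toAdd ∈ stemIB G := by
    have : stemPi G (stemIota G (Additive.ofMul gz) + (h : stemP G).2.toAdd) = 0 := by
      have := congrArg Multiplicative.toAdd hmem
      simpa using this
    exact (QuotientAddGroup.eq_zero_iff _).mp this
  obtain ⟨b, hbmem, hb⟩ := AddSubgroup.mem_map.mp hIB
  have hbBZ : Additive.toMul b ∈ stemBZ G := hbmem
  set z0 : ↥(mlCenter G) := Additive.toMul b * gz⁻¹ with hz0
  have hiz0 : stemIota G (Additive.ofMul z0) = (h : stemP G).2.toAdd := by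
    have e0 : Additive.ofMul z0 = b - Additive.ofMul gz := by
      rw [hz0, ofMul_mul, ofMul_inv, ofMul_toMul, sub_eq_add_neg]
    rw [e0, map_sub, hb]
    abel
  have hwHS : (((z0 : G), Multiplicative.ofAdd (-(stemIota G (Additive.ofMul z0)))) : stemP G) ∈
      (stemH G).toSubgroup := by
    rw [mem_stemH_iff, stemChi_apply, stemPsi_center G z0]
    simp [← ofAdd_add, ← map_add]
  set w : ↥(stemH G).toSubgroup :=
    ⟨((z0 : G), Multiplicative.ofAdd (-(stemIota G (Additive.ofMul z0)))), hwHS⟩ with hw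
  have hwW : w ∈ (stemW G).toSubgroup := ⟨z0, rfl, rfl⟩
  have hC : ((Additive.toMul b : ↥(mlCenter G)) : G) ∈ mlCommutator G :=
    Subgroup.mem_comap.mp hbBZ
  have key : h * w = stemJ G ⟨((Additive.toMul b : ↥(mlCenter G)) : G), hC⟩ := by
    apply Subtype.ext
    rw [stemJ_coe]
    show ((h : stemP G) * (w : stemP G)) = _
    apply Prod.ext
    · show (h : stemP G).1 * (z0 : G) = ((Additive.toMul b : ↥(mlCenter G)) : G)
      have e2 : gz * z0 = Additive.toMul b := by
        rw [hz0, mul_comm (Additive.toMul b) gz⁻¹, mul_inv_cancel_left]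
      have e1 : (h : stemP G).1 * (z0 : G) = ((gz * z0 : ↥(mlCenter G)) : G) := by
        push_cast
        rfl
      rw [e1, e2]
    · show (h : stemP G).2 * Multiplicative.ofAdd (-(stemIota G (Additive.ofMul z0))) = 1
      rw [hiz0]
      simp
  have hmk : (QuotientGroup.mk h : stemHf G) = QuotientGroup.mk (h * w) :=
    (QuotientGroup.mk_mul_of_mem h hwW).symm
  rw [hmk, key]
  exact mk_mem_mlCommutator G (stemJ_mem G _)

end StemConstruction

/-- Every multiplicative Lie algebra is isoclinic to a stem
multiplicative Lie algebra. -/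
theorem exists_stem_isoclinic (G : Type u) [MultLieAlgebra G] :
    Nonempty (StemWitness G) :=
  ⟨{ H := stemHf G
     instH := inferInstance
     stem := stemHf_stem G
     isoclinic := ⟨{ lam := stemLam G
                     mu := stemMuEquiv G
                     map_commutator := stem_map_commutator G
                     map_lstar := stem_map_lstar G }⟩ }⟩

end MultLieAlgebra
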